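/- arXiv:2204.03602 — 2 statements merged into one kernel-verified Lean document; each statement's English description precedes it below -/
import Mathlib

section
/- For all ρ ≥ 0, δ ≥ 0 with ρ + δ > 0, the function R(y) = 2δ·[(1/α²)^p/Γ(p)]·y^{p−1}·e^{−y/α²} − [ρ + δ·γ(p, y/α²)/Γ(p)], y > 0 (the critical-point function of the trimodal normal density, arising from the Gaussian kernel for which 𝔥 ≡ 1), has at most two roots in (0, ∞). -/
open MeasureTheory Real Set Filter

noncomputable def lincGamma (p u : ℝ) : ℝ := ∫ w in (0:ℝ)..u, w ^ (p - 1) * Real.exp (-w)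

noncomputable def Tfun (p α x : ℝ) : ℝ := lincGamma p (x ^ 2 / α ^ 2) / Real.Gamma p

noncomputable def gammaPDF (p y : ℝ) : ℝ := y ^ (p - 1) * Real.exp (-y) / Real.Gamma p

noncomputable def Znorm (p σ α ρ δ : ℝ) (g : ℝ → ℝ) : ℝ :=
  σ * ∫ w : ℝ, (ρ + δ * Tfun p α w) * g w

noncomputable def tdPDF (p μ σ α ρ δ : ℝ) (g : ℝ → ℝ) (x : ℝ) : ℝ :=
  (1 / Znorm p σ α ρ δ g) * (ρ + δ * Tfun p α ((x - μ) / σ)) * g ((x - μ) / σ)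

noncomputable def cdfOf (d : ℝ → ℝ) (x : ℝ) : ℝ := ∫ t in Iic x, d t

lemma lincGamma_hasDerivAt {p : ℝ} (hp : 0 < p) {u : ℝ} (hu : 0 < u) :
    HasDerivAt (lincGamma p) (u ^ (p - 1) * Real.exp (-u)) u := by
  apply intervalIntegral.integral_hasDerivAt_right
  · rw [intervalIntegrable_iff_integrableOn_Ioc_of_le hu.le]
    exact (((Real.GammaIntegral_convergent hp).mono_set Ioc_subset_Ioi_self).congr_fun
      (fun w _ => mul_comm _ _) measurableSet_Ioc)
  · refine ⟨Ioi 0, Ioi_mem_nhds hu, (ContinuousOn.aestronglyMeasurable ?_ measurableSet_Ioi)⟩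
    intro w hw
    exact (((Real.continuousAt_rpow_const w (p-1) (Or.inl (ne_of_gt hw))).mul
      ((Real.continuous_exp.comp continuous_neg).continuousAt))).continuousWithinAt
  · exact ((Real.continuousAt_rpow_const u (p-1) (Or.inl hu.ne')).mul
      ((Real.continuous_exp.comp continuous_neg).continuousAt))

lemma R_hasDerivAt {p α ρ δ : ℝ} (hp : 0 < p) (hα : 0 < α) {y : ℝ} (hy : 0 < y) :
    HasDerivAt (fun y : ℝ =>
        2 * δ * ((1 / α ^ 2) ^ p / Real.Gamma p) * y ^ (p - 1) * Real.exp (-y / α ^ 2)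
          - (ρ + δ * lincGamma p (y / α ^ 2) / Real.Gamma p))
      (δ * ((1 / α ^ 2) ^ p / Real.Gamma p) * Real.exp (-y / α ^ 2) * y ^ (p - 2)
        * (2 * (p - 1) - (2 / α ^ 2 + 1) * y)) y := by
  have hA : (0:ℝ) < α ^ 2 := by positivity
  have hyA : 0 < y / α ^ 2 := div_pos hy hA
  have h1 : HasDerivAt (fun y : ℝ => y ^ (p - 1)) ((p - 1) * y ^ (p - 1 - 1)) y :=
    Real.hasDerivAt_rpow_const (Or.inl hy.ne')
  have h2 : HasDerivAt (fun y : ℝ => Real.exp (-y / α ^ 2))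
      (Real.exp (-y / α ^ 2) * (-1 / α ^ 2)) y := by
    have := (Real.hasDerivAt_exp (-y / α ^ 2)).comp y
      (((hasDerivAt_id y).neg).div_const (α ^ 2))
    simpa [Function.comp_def] using this
  have h3 : HasDerivAt (fun y : ℝ => lincGamma p (y / α ^ 2))
      ((y / α ^ 2) ^ (p - 1) * Real.exp (-(y / α ^ 2)) * (1 / α ^ 2)) y := by
    have := (lincGamma_hasDerivAt hp hyA).comp y ((hasDerivAt_id y).div_const (α ^ 2))
    simpa [Function.comp_def] using this
  have hmain := ((h1.const_mul (2 * δ * ((1 / α ^ 2) ^ p / Real.Gamma p))).mul h2).sub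
    ((hasDerivAt_const y ρ).add ((h3.const_mul δ).div_const (Real.Gamma p)))
  refine HasDerivAt.congr_deriv hmain ?_
  have e1 : y ^ (p - 1 - 1) = y ^ (p - 2) := by rw [show p - 1 - 1 = p - 2 by ring]
  have e2 : y ^ (p - 1) = y ^ (p - 2) * y := by
    rw [show p - 1 = p - 2 + 1 by ring, Real.rpow_add hy, Real.rpow_one]
  have e3 : (y / α ^ 2) ^ (p - 1) = y ^ (p - 1) * (1 / α ^ 2) ^ (p - 1) := by
    rw [div_eq_mul_inv, Real.mul_rpow hy.le (by positivity), ← Real.rpow_natCast]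
    norm_num [Real.inv_rpow hA.le, Real.rpow_natCast]
  have e4 : (1 / α ^ 2) ^ p = (1 / α ^ 2) ^ (p - 1) * (1 / α ^ 2) := by
    have h := Real.rpow_add (show (0:ℝ) < 1 / α ^ 2 by positivity) (p - 1) 1
    rw [Real.rpow_one, show p - 1 + 1 = p by ring] at h
    exact h
  rw [e1, e3, e4, neg_div]
  rw [e2]
  ring


/-- in the Gaussian case, the critical-point function `R` has at most
two roots in (0,∞). -/
theorem stmt13 (p α ρ δ : ℝ) (hp : 0 < p) (hα : 0 < α)
    (hρ : 0 ≤ ρ) (hδ : 0 ≤ δ) (hρδ : 0 < ρ + δ) :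
    Set.encard {y ∈ Ioi (0:ℝ) |
        2 * δ * ((1 / α ^ 2) ^ p / Real.Gamma p) * y ^ (p - 1) * Real.exp (-y / α ^ 2)
          - (ρ + δ * lincGamma p (y / α ^ 2) / Real.Gamma p) = 0} ≤ 2 := by
  set Rf : ℝ → ℝ := fun y =>
    2 * δ * ((1 / α ^ 2) ^ p / Real.Gamma p) * y ^ (p - 1) * Real.exp (-y / α ^ 2)
      - (ρ + δ * lincGamma p (y / α ^ 2) / Real.Gamma p) with hRf
  set S : Set ℝ := {y ∈ Ioi (0:ℝ) | Rf y = 0} with hS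
  by_cases hδ0 : δ = 0
  · have hρ0 : 0 < ρ := by rw [hδ0] at hρδ; linarith
    have : S = ∅ := by
      ext y
      simp only [hS, hRf, mem_sep_iff, mem_empty_iff_false, iff_false, not_and, hδ0]
      intro _ h
      simp only [zero_mul, mul_zero, zero_div, add_zero, zero_sub, neg_eq_zero] at h
      · nlinarith [h]
    rw [this, Set.encard_empty]; exact by norm_num
  · have hδpos : 0 < δ := lt_of_le_of_ne hδ (Ne.symm hδ0)
    set s : ℝ := 2 / α ^ 2 + 1 with hs
    have hspos : 0 < s := by positivity
    set t : ℝ := 2 * (p - 1) / s with ht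
    have hderiv : ∀ y ∈ Ioi (0:ℝ), HasDerivAt Rf
        (δ * ((1 / α ^ 2) ^ p / Real.Gamma p) * Real.exp (-y / α ^ 2) * y ^ (p - 2)
          * (2 * (p - 1) - s * y)) y := fun y hy => R_hasDerivAt hp hα hy
    have hcont : ContinuousOn Rf (Ioi 0) := fun y hy =>
      (hderiv y hy).continuousAt.continuousWithinAt
    have hC : 0 < (1 / α ^ 2) ^ p / Real.Gamma p := by
      apply div_pos (Real.rpow_pos_of_pos (by positivity) p) (Real.Gamma_pos_of_pos hp)
    have monoA : StrictMonoOn Rf (Ioc 0 t) := by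
      apply strictMonoOn_of_deriv_pos (convex_Ioc _ _) (hcont.mono Ioc_subset_Ioi_self)
      intro x hx
      rw [interior_Ioc] at hx
      rw [(hderiv x hx.1).deriv]
      have hK : 0 < 2 * (p - 1) - s * x := by
        have := (lt_div_iff₀' hspos).mp hx.2
        linarith [this]
      have := Real.rpow_pos_of_pos hx.1 (p - 2)
      positivity
    have antiB : StrictAntiOn Rf (Ioi 0 ∩ Ici t) := by
      apply strictAntiOn_of_deriv_neg ((convex_Ioi _).inter (convex_Ici _))
        (hcont.mono inter_subset_left)
      intro x hx
      rw [interior_inter, interior_Ioi, interior_Ici] at hx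
      rw [(hderiv x hx.1).deriv]
      have hK : 2 * (p - 1) - s * x < 0 := by
        have := (div_lt_iff₀' hspos).mp hx.2
        linarith [this]
      have h1 := Real.rpow_pos_of_pos hx.1 (p - 2)
      have h2 : 0 < Real.exp (-x / α ^ 2) := Real.exp_pos _
      have hpos : 0 < δ * ((1 / α ^ 2) ^ p / Real.Gamma p) * Real.exp (-x / α ^ 2) * x ^ (p - 2) := by
        positivity
      exact mul_neg_of_pos_of_neg hpos hK
    have hsub : S ⊆ (S ∩ Ioc 0 t) ∪ (S ∩ (Ioi 0 ∩ Ici t)) := by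
      intro y hy
      rcases le_or_gt y t with h | h
      · exact Or.inl ⟨hy, hy.1, h⟩
      · exact Or.inr ⟨hy, hy.1, le_of_lt h⟩
    calc S.encard ≤ ((S ∩ Ioc 0 t) ∪ (S ∩ (Ioi 0 ∩ Ici t))).encard := Set.encard_mono hsub
      _ ≤ (S ∩ Ioc 0 t).encard + (S ∩ (Ioi 0 ∩ Ici t)).encard := Set.encard_union_le _ _
      _ ≤ 1 + 1 := by
          apply add_le_add
          · rw [Set.encard_le_one_iff]
            intro a b ha hb
            exact monoA.injOn ha.2 hb.2 (ha.1.2.trans hb.1.2.symm)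
          · rw [Set.encard_le_one_iff]
            intro a b ha hb
            exact antiB.injOn ha.2 hb.2 (ha.1.2.trans hb.1.2.symm)
      _ = 2 := one_add_one_eq_two
end

section
/- The rate of the trimodal normal distribution is infinite: for the trimodal normal density f(·; θ), the limit τ = −lim_{x→∞} (d/dx) log f(x; θ) equals +∞; equivalently, (1/σ)·[ (x−μ)/σ − (2δ/(α·Γ(p)))·((x−μ)/(ασ))^{2p−1}·e^{−((x−μ)/(ασ))²}/(ρ + δ·T((x−μ)/σ; α, p)) ] → +∞ as x → ∞. Hence, far enough in the tail, the trimodal normal distribution has the same (infinite) rate as the normal distribution. -/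
open MeasureTheory Real Set Filter

noncomputable def normalPDF (x : ℝ) : ℝ := Real.exp (-x ^ 2 / 2) / Real.sqrt (2 * Real.pi)


-- Auxiliary lemmas

lemma intInt (p : ℝ) (hp : 0 < p) (a b : ℝ) :
    IntervalIntegrable (fun w : ℝ => w ^ (p-1) * Real.exp (-w)) volume a b :=
  (intervalIntegral.intervalIntegrable_rpow' (by linarith)).mul_continuousOn
    (Continuous.continuousOn (by continuity))

lemma lincGamma_nonneg (p : ℝ) (hp : 0 < p) {t : ℝ} (ht : 0 ≤ t) : 0 ≤ lincGamma p t := by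
  apply intervalIntegral.integral_nonneg ht
  intro u hu
  exact mul_nonneg (Real.rpow_nonneg hu.1 _) (Real.exp_pos _).le

lemma lincGamma_pos (p : ℝ) (hp : 0 < p) {t : ℝ} (ht : 0 < t) : 0 < lincGamma p t := by
  apply intervalIntegral.intervalIntegral_pos_of_pos_on (intInt p hp 0 t) _ ht
  intro u hu
  exact mul_pos (Real.rpow_pos_of_pos hu.1 _) (Real.exp_pos _)

lemma lincGamma_le (p : ℝ) (hp : 0 < p) {t : ℝ} (ht : 0 ≤ t) : lincGamma p t ≤ Real.Gamma p := by
  rw [lincGamma, intervalIntegral.integral_of_le ht, Real.Gamma_eq_integral hp]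
  have hconv := Real.GammaIntegral_convergent hp
  calc ∫ w in Ioc 0 t, w ^ (p-1) * Real.exp (-w)
      = ∫ w in Ioc 0 t, Real.exp (-w) * w ^ (p-1) := by simp [mul_comm]
    _ ≤ ∫ w in Ioi 0, Real.exp (-w) * w ^ (p-1) := by
        apply setIntegral_mono_set hconv
        · filter_upwards [self_mem_ae_restrict measurableSet_Ioi] with w hw
          exact mul_nonneg (Real.exp_pos _).le (Real.rpow_nonneg (le_of_lt hw) _)
        · exact HasSubset.Subset.eventuallyLE Ioc_subset_Ioi_self

lemma lincGamma_cont (p : ℝ) (hp : 0 < p) : Continuous (lincGamma p) :=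
  intervalIntegral.continuous_primitive (intInt p hp) 0

lemma lincGamma_tendsto (p : ℝ) (hp : 0 < p) :
    Tendsto (lincGamma p) atTop (nhds (Real.Gamma p)) := by
  have h := intervalIntegral_tendsto_integral_Ioi (μ := volume) 0
    (Real.GammaIntegral_convergent hp) tendsto_id
  rw [Real.Gamma_eq_integral hp]
  show Tendsto (fun u => lincGamma p u) atTop _
  simpa [lincGamma, mul_comm] using h

lemma lincGamma_hasDeriv (p : ℝ) (hp : 0 < p) {t : ℝ} (ht : 0 < t) :
    HasDerivAt (lincGamma p) (t ^ (p-1) * Real.exp (-t)) t := by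
  apply intervalIntegral.integral_hasDerivAt_right (intInt p hp 0 t)
  · exact (Measurable.stronglyMeasurable (by fun_prop)).stronglyMeasurableAtFilter
  · exact ((Real.continuousAt_rpow_const _ _ (Or.inl (ne_of_gt ht))).mul
      (by fun_prop))

lemma Tfun_nonneg (p α : ℝ) (hp : 0 < p) (x : ℝ) : 0 ≤ Tfun p α x :=
  div_nonneg (lincGamma_nonneg p hp (by positivity)) (Real.Gamma_pos_of_pos hp).le

lemma Tfun_le_one (p α : ℝ) (hp : 0 < p) (x : ℝ) : Tfun p α x ≤ 1 :=
  (div_le_one (Real.Gamma_pos_of_pos hp)).2 (lincGamma_le p hp (by positivity))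

lemma Tfun_cont (p α : ℝ) (hp : 0 < p) : Continuous (Tfun p α) :=
  ((lincGamma_cont p hp).comp (by continuity)).div_const _

lemma Tfun_pos (p α : ℝ) (hp : 0 < p) (hα : 0 < α) {x : ℝ} (hx : x ≠ 0) :
    0 < Tfun p α x :=
  div_pos (lincGamma_pos p hp (by positivity)) (Real.Gamma_pos_of_pos hp)

lemma A_pos (p α ρ δ : ℝ) (hp : 0 < p) (hα : 0 < α) (hρ : 0 ≤ ρ) (hδ : 0 ≤ δ)
    (hρδ : 0 < ρ + δ) {x : ℝ} (hx : x ≠ 0) : 0 < ρ + δ * Tfun p α x := by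
  rcases hρ.eq_or_lt with h | h
  · have hδ' : 0 < δ := by linarith
    have := Tfun_pos p α hp hα hx
    nlinarith
  · nlinarith [mul_nonneg hδ (Tfun_nonneg p α hp x)]

lemma normalPDF_pos (x : ℝ) : 0 < normalPDF x :=
  div_pos (Real.exp_pos _) (Real.sqrt_pos.2 (by positivity))

lemma normalPDF_integrable : Integrable normalPDF := by
  have : Integrable (fun x : ℝ => Real.exp (-(1/2) * x ^ 2)) :=
    integrable_exp_neg_mul_sq (by norm_num)
  have h2 := this.div_const (Real.sqrt (2 * Real.pi))
  convert h2 using 2 with x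
  unfold normalPDF
  ring_nf

lemma Zint_pos (p α ρ δ : ℝ) (hp : 0 < p) (hα : 0 < α) (hρ : 0 ≤ ρ) (hδ : 0 ≤ δ)
    (hρδ : 0 < ρ + δ) :
    0 < ∫ w : ℝ, (ρ + δ * Tfun p α w) * normalPDF w := by
  have hcont : Continuous fun w => (ρ + δ * Tfun p α w) * normalPDF w := by
    apply Continuous.mul
    · exact continuous_const.add (continuous_const.mul (Tfun_cont p α hp))
    · unfold normalPDF; continuity
  have hnn : ∀ w, 0 ≤ (ρ + δ * Tfun p α w) * normalPDF w := fun w =>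
    mul_nonneg (by nlinarith [Tfun_nonneg p α hp w]) (normalPDF_pos w).le
  have hint : Integrable fun w => (ρ + δ * Tfun p α w) * normalPDF w := by
    apply Integrable.mono ((normalPDF_integrable.const_mul (ρ + δ)))
      hcont.aestronglyMeasurable
    filter_upwards with w
    rw [Real.norm_eq_abs, Real.norm_eq_abs, abs_of_nonneg (hnn w),
      abs_of_nonneg (mul_nonneg (by linarith) (normalPDF_pos w).le)]
    have h1 := Tfun_le_one p α hp w
    have h2 := Tfun_nonneg p α hp w
    have h3 := (normalPDF_pos w).le
    nlinarith [mul_nonneg (mul_nonneg hδ (by linarith : (0:ℝ) ≤ 1 - Tfun p α w)) h3]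
  have h12 : (0:ℝ) < ∫ w in (1:ℝ)..(2:ℝ), (ρ + δ * Tfun p α w) * normalPDF w := by
    apply intervalIntegral.intervalIntegral_pos_of_pos_on
      (hcont.intervalIntegrable 1 2) _ (by norm_num)
    intro w hw
    exact mul_pos (A_pos p α ρ δ hp hα hρ hδ hρδ (by nlinarith [hw.1])) (normalPDF_pos w)
  calc (0:ℝ) < ∫ w in (1:ℝ)..(2:ℝ), (ρ + δ * Tfun p α w) * normalPDF w := h12
    _ = ∫ w in Ioc (1:ℝ) 2, (ρ + δ * Tfun p α w) * normalPDF w := by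
        rw [intervalIntegral.integral_of_le (by norm_num)]
    _ ≤ ∫ w : ℝ, (ρ + δ * Tfun p α w) * normalPDF w :=
        setIntegral_le_integral hint (Filter.Eventually.of_forall hnn)

lemma Tfun_tendsto (p α : ℝ) (hp : 0 < p) (hα : 0 < α) :
    Tendsto (fun x : ℝ => Tfun p α x) atTop (nhds 1) := by
  have harg : Tendsto (fun x : ℝ => x ^ 2 / α ^ 2) atTop atTop :=
    (tendsto_pow_atTop two_ne_zero).atTop_div_const (by positivity)
  have h := ((lincGamma_tendsto p hp).comp harg).div_const (Real.Gamma p)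
  have : Real.Gamma p / Real.Gamma p = 1 :=
    div_self (ne_of_gt (Real.Gamma_pos_of_pos hp))
  rw [this] at h
  exact h

lemma decay (p : ℝ) :
    Tendsto (fun s : ℝ => s ^ (2*p-1) * Real.exp (-s^2)) atTop (nhds 0) := by
  have h := (tendsto_rpow_mul_exp_neg_mul_atTop_nhds_zero ((2*p-1)/2) 1 one_pos).comp
    (tendsto_pow_atTop (two_ne_zero (α := ℕ)))
  apply h.congr'
  filter_upwards [eventually_gt_atTop (0:ℝ)] with s hs
  have h1 : ((s:ℝ)^(2:ℕ)) ^ ((2*p-1)/2) = s ^ (2*p-1) := by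
    rw [← Real.rpow_natCast s 2, ← Real.rpow_mul hs.le]
    norm_num
    congr 1
    ring
  simp only [Function.comp_apply, h1, neg_one_mul]

lemma stepA (p μ σ α ρ δ : ℝ) (hp : 0 < p) (hσ : 0 < σ) (hα : 0 < α)
    (hρ : 0 ≤ ρ) (hδ : 0 ≤ δ) (hρδ : 0 < ρ + δ) :
    Tendsto (fun x : ℝ =>
        (1 / σ) * ((x - μ) / σ
          - (2 * δ / (α * Real.Gamma p)) * ((x - μ) / (α * σ)) ^ (2 * p - 1)
              * Real.exp (-((x - μ) / (α * σ)) ^ 2)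
              / (ρ + δ * Tfun p α ((x - μ) / σ))))
      atTop atTop := by
  have hsub : Tendsto (fun x : ℝ => x - μ) atTop atTop := by
    simpa [sub_eq_add_neg] using tendsto_atTop_add_const_right atTop (-μ) (tendsto_id (α := ℝ))
  have hu : Tendsto (fun x : ℝ => (x - μ) / σ) atTop atTop := hsub.atTop_div_const hσ
  have hv : Tendsto (fun x : ℝ => (x - μ) / (α * σ)) atTop atTop :=
    hsub.atTop_div_const (by positivity)
  have hA : Tendsto (fun x : ℝ => ρ + δ * Tfun p α ((x - μ) / σ)) atTop (nhds (ρ + δ)) := by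
    have h1 := ((Tfun_tendsto p α hp hα).comp hu).const_mul δ
    have h2 := tendsto_const_nhds (α := ℝ) (x := ρ) (f := atTop).add h1
    simpa using h2
  have hnum : Tendsto (fun x : ℝ => (2 * δ / (α * Real.Gamma p))
      * ((x - μ) / (α * σ)) ^ (2 * p - 1) * Real.exp (-((x - μ) / (α * σ)) ^ 2))
      atTop (nhds 0) := by
    have h := ((decay p).comp hv).const_mul (2 * δ / (α * Real.Gamma p))
    simpa [Function.comp, mul_assoc] using h
  have hq : Tendsto (fun x : ℝ => (2 * δ / (α * Real.Gamma p))
      * ((x - μ) / (α * σ)) ^ (2 * p - 1) * Real.exp (-((x - μ) / (α * σ)) ^ 2)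
      / (ρ + δ * Tfun p α ((x - μ) / σ))) atTop (nhds 0) := by
    simpa [Pi.div_def] using hnum.div hA (ne_of_gt hρδ)
  have hsum := hq.neg.add_atTop hu
  have hmain : Tendsto (fun x : ℝ => (x - μ) / σ
      - (2 * δ / (α * Real.Gamma p)) * ((x - μ) / (α * σ)) ^ (2 * p - 1)
        * Real.exp (-((x - μ) / (α * σ)) ^ 2)
        / (ρ + δ * Tfun p α ((x - μ) / σ))) atTop atTop := by
    apply hsum.congr
    intro x; ring
  exact hmain.const_mul_atTop (by positivity)

lemma stepB (p μ σ α ρ δ : ℝ) (hp : 0 < p) (hσ : 0 < σ) (hα : 0 < α)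
    (hρ : 0 ≤ ρ) (hδ : 0 ≤ δ) (hρδ : 0 < ρ + δ) {x : ℝ} (hx : μ < x) :
    -(deriv (fun y : ℝ => Real.log (tdPDF p μ σ α ρ δ normalPDF y)) x)
      = (1 / σ) * ((x - μ) / σ
          - (2 * δ / (α * Real.Gamma p)) * ((x - μ) / (α * σ)) ^ (2 * p - 1)
              * Real.exp (-((x - μ) / (α * σ)) ^ 2)
              / (ρ + δ * Tfun p α ((x - μ) / σ))) := by
  have hΓ : (0:ℝ) < Real.Gamma p := Real.Gamma_pos_of_pos hp
  set u0 : ℝ := (x - μ) / σ with hu0def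
  have hu0 : 0 < u0 := div_pos (by linarith) hσ
  set t0 : ℝ := u0 ^ 2 / α ^ 2 with ht0def
  have ht0 : 0 < t0 := by positivity
  have hZ : 0 < Znorm p σ α ρ δ normalPDF :=
    mul_pos hσ (Zint_pos p α ρ δ hp hα hρ hδ hρδ)
  have hApos : 0 < ρ + δ * Tfun p α u0 :=
    A_pos p α ρ δ hp hα hρ hδ hρδ (ne_of_gt hu0)
  have hvx : (x - μ) / (α * σ) = u0 / α := by
    rw [hu0def, div_div, mul_comm]
  have ht0eq : t0 = (u0 / α) ^ 2 := by rw [ht0def]; exact (div_pow u0 α 2).symm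
  have hvpos : 0 < u0 / α := by positivity
  have hr1 : ((u0 / α) ^ (2:ℕ)) ^ (p - 1) = (u0 / α) ^ (2 * p - 2) := by
    rw [← Real.rpow_natCast (u0 / α) 2, ← Real.rpow_mul hvpos.le]
    norm_num
    congr 1
    ring
  have hr2 : (u0 / α) ^ (2 * p - 1) = (u0 / α) ^ (2 * p - 2) * (u0 / α) := by
    rw [show (2*p-1) = (2*p-2)+1 by ring, Real.rpow_add hvpos, Real.rpow_one]
  -- derivative chain
  have h1 : HasDerivAt (fun y : ℝ => (y - μ) / σ) (1 / σ) x := by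
    simpa using ((hasDerivAt_id x).sub_const μ).div_const σ
  have h2 : HasDerivAt (fun s : ℝ => s ^ 2 / α ^ 2) (2 * u0 / α ^ 2) u0 := by
    simpa using (hasDerivAt_pow 2 u0).div_const (α ^ 2)
  have h12 : HasDerivAt (fun y : ℝ => ((y - μ) / σ) ^ 2 / α ^ 2)
      (2 * u0 / α ^ 2 * (1 / σ)) x := by have h := h2.comp x h1; exact h
  have h3 := lincGamma_hasDeriv p hp ht0
  have h123 : HasDerivAt (fun y : ℝ => lincGamma p (((y - μ) / σ) ^ 2 / α ^ 2))
      (t0 ^ (p - 1) * Real.exp (-t0) * (2 * u0 / α ^ 2 * (1 / σ))) x := by have h := h3.comp x h12; exact h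
  have hT : HasDerivAt (fun y : ℝ => Tfun p α ((y - μ) / σ))
      (t0 ^ (p - 1) * Real.exp (-t0) * (2 * u0 / α ^ 2 * (1 / σ)) / Real.Gamma p) x :=
    h123.div_const (Real.Gamma p)
  have hA : HasDerivAt (fun y : ℝ => ρ + δ * Tfun p α ((y - μ) / σ))
      (δ * (t0 ^ (p - 1) * Real.exp (-t0) * (2 * u0 / α ^ 2 * (1 / σ)) / Real.Gamma p)) x :=
    (hT.const_mul δ).const_add ρ
  have hlogA : HasDerivAt (fun y : ℝ => Real.log (ρ + δ * Tfun p α ((y - μ) / σ)))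
      (δ * (t0 ^ (p - 1) * Real.exp (-t0) * (2 * u0 / α ^ 2 * (1 / σ)) / Real.Gamma p)
        / (ρ + δ * Tfun p α u0)) x := hA.log (ne_of_gt hApos)
  have hsq : HasDerivAt (fun y : ℝ => -(((y - μ) / σ) ^ 2 / 2)
      - Real.log (Real.sqrt (2 * Real.pi)))
      (-(2 * u0 * (1 / σ) / 2)) x := by
    have := (((h1.pow 2).div_const 2).neg).sub_const (Real.log (Real.sqrt (2 * Real.pi)))
    simpa using this
  have hS : HasDerivAt (fun y : ℝ =>
      Real.log (1 / Znorm p σ α ρ δ normalPDF)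
        + Real.log (ρ + δ * Tfun p α ((y - μ) / σ))
        + (-(((y - μ) / σ) ^ 2 / 2) - Real.log (Real.sqrt (2 * Real.pi))))
      (δ * (t0 ^ (p - 1) * Real.exp (-t0) * (2 * u0 / α ^ 2 * (1 / σ)) / Real.Gamma p)
        / (ρ + δ * Tfun p α u0) + -(2 * u0 * (1 / σ) / 2)) x :=
    (hlogA.const_add _).add hsq
  have hS' : HasDerivAt (fun y : ℝ =>
      Real.log (1 / Znorm p σ α ρ δ normalPDF)
        + Real.log (ρ + δ * Tfun p α ((y - μ) / σ))
        + (-(((y - μ) / σ) ^ 2 / 2) - Real.log (Real.sqrt (2 * Real.pi))))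
      (-((1 / σ) * (u0
          - (2 * δ / (α * Real.Gamma p)) * (u0 / α) ^ (2 * p - 1)
              * Real.exp (-(u0 / α) ^ 2)
              / (ρ + δ * Tfun p α u0)))) x := by
    convert hS using 1
    rw [ht0eq, hr1, hr2]
    field_simp
    ring
  have heq : (fun y : ℝ => Real.log (tdPDF p μ σ α ρ δ normalPDF y))
      =ᶠ[nhds x] (fun y : ℝ =>
      Real.log (1 / Znorm p σ α ρ δ normalPDF)
        + Real.log (ρ + δ * Tfun p α ((y - μ) / σ))
        + (-(((y - μ) / σ) ^ 2 / 2) - Real.log (Real.sqrt (2 * Real.pi)))) := by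
    filter_upwards [eventually_gt_nhds hx] with y hy
    have huy : 0 < (y - μ) / σ := div_pos (by linarith) hσ
    have hAy : 0 < ρ + δ * Tfun p α ((y - μ) / σ) :=
      A_pos p α ρ δ hp hα hρ hδ hρδ (ne_of_gt huy)
    have hg : 0 < normalPDF ((y - μ) / σ) := normalPDF_pos _
    have hZne : (1 : ℝ) / Znorm p σ α ρ δ normalPDF ≠ 0 := by positivity
    rw [tdPDF, Real.log_mul (mul_ne_zero hZne (ne_of_gt hAy)) (ne_of_gt hg),
      Real.log_mul hZne (ne_of_gt hAy)]
    congr 1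
    rw [normalPDF, Real.log_div (Real.exp_ne_zero _)
      (ne_of_gt (Real.sqrt_pos.2 (by positivity))), Real.log_exp]
    rw [neg_div]
  rw [heq.deriv_eq, hS'.deriv, hvx, neg_neg]

/-- the rate of the trimodal normal distribution is infinite. -/
theorem stmt18 (p μ σ α ρ δ : ℝ) (hp : 0 < p) (hσ : 0 < σ) (hα : 0 < α)
    (hρ : 0 ≤ ρ) (hδ : 0 ≤ δ) (hρδ : 0 < ρ + δ) :
    Tendsto (fun x : ℝ =>
        -(deriv (fun y : ℝ => Real.log (tdPDF p μ σ α ρ δ normalPDF y)) x))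
      atTop atTop
    ∧ Tendsto (fun x : ℝ =>
        (1 / σ) * ((x - μ) / σ
          - (2 * δ / (α * Real.Gamma p)) * ((x - μ) / (α * σ)) ^ (2 * p - 1)
              * Real.exp (-((x - μ) / (α * σ)) ^ 2)
              / (ρ + δ * Tfun p α ((x - μ) / σ))))
      atTop atTop := by
  refine ⟨?_, stepA p μ σ α ρ δ hp hσ hα hρ hδ hρδ⟩
  apply (stepA p μ σ α ρ δ hp hσ hα hρ hδ hρδ).congr'
  filter_upwards [eventually_gt_atTop μ] with x hx
  exact (stepB p μ σ α ρ δ hp hσ hα hρ hδ hρδ hx).symm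
end
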